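/- Let γ > 1, κ > 0 and ρ̄ > 0. Then the function θ₃ : (0,∞) → ℝ defined by θ₃(ρ) = (2√(κγ)/(γ+1))·(ρ^{(γ+1)/2} − ρ̄^{(γ+1)/2}) for ρ ≤ ρ̄ (rarefaction branch) and θ₃(ρ) = √((ρ − ρ̄)·(κρ^γ − κρ̄^γ)) for ρ > ρ̄ (shock branch) is continuously differentiable on (0,∞), and its derivative at ρ̄ equals c̄ = √(κγρ̄^{γ−1}). -/

import Mathlib

open Real Set Filter Topology

section Aux

variable {γ κ ρbar : ℝ}

/-- Derivative of the pressure law. -/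
lemma aux_p_deriv (κ γ : ℝ) {x : ℝ} (hx : x ≠ 0) :
    HasDerivAt (fun y : ℝ => κ * y ^ γ) (κ * γ * x ^ (γ - 1)) x := by
  have h := (Real.hasDerivAt_rpow_const (p := γ) (Or.inl hx)).const_mul κ
  simpa [mul_assoc] using h

/-- Derivative of the rarefaction branch. -/
lemma aux_f_deriv (hγ : 1 < γ) {x : ℝ} (hx : 0 < x) :
    HasDerivAt (fun y : ℝ =>
        (2 * Real.sqrt (κ * γ) / (γ + 1)) * (y ^ ((γ + 1) / 2) - ρbar ^ ((γ + 1) / 2)))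
      (Real.sqrt (κ * γ) * x ^ ((γ - 1) / 2)) x := by
  have hne : x ≠ 0 := ne_of_gt hx
  have h := ((Real.hasDerivAt_rpow_const (p := (γ + 1) / 2) (Or.inl hne)).sub_const
      (ρbar ^ ((γ + 1) / 2))).const_mul (2 * Real.sqrt (κ * γ) / (γ + 1))
  have hγ1 : γ + 1 ≠ 0 := by linarith
  have hexp : (γ + 1) / 2 - 1 = (γ - 1) / 2 := by ring
  rw [hexp] at h
  refine h.congr_deriv ?_
  field_simp

/-- The sound speed in product form. -/
lemma aux_cbar (hγ : 1 < γ) (hκ : 0 < κ) (hρbar : 0 < ρbar) :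
    Real.sqrt (κ * γ * ρbar ^ (γ - 1)) = Real.sqrt (κ * γ) * ρbar ^ ((γ - 1) / 2) := by
  rw [Real.sqrt_mul (by positivity) (ρbar ^ (γ - 1))]
  congr 1
  rw [Real.sqrt_eq_rpow, ← Real.rpow_mul hρbar.le]
  ring_nf

/-- Positivity of the argument of the square root on the shock branch. -/
lemma aux_arg_pos (hγ : 1 < γ) (hκ : 0 < κ) (hρbar : 0 < ρbar) {x : ℝ} (hx : ρbar < x) :
    0 < (x - ρbar) * (κ * x ^ γ - κ * ρbar ^ γ) := by
  have h1 : ρbar ^ γ < x ^ γ := Real.rpow_lt_rpow hρbar.le hx (by linarith)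
  have h2 : κ * ρbar ^ γ < κ * x ^ γ := by nlinarith
  nlinarith

end Aux

/-- The piecewise function θ₃ of model M3 is continuously
differentiable on (0,∞), and its derivative at ρ̄ equals the sound speed c̄. -/
theorem theta3_contDiffOn_and_deriv
    (γ κ ρbar cbar : ℝ) (hγ : 1 < γ) (hκ : 0 < κ) (hρbar : 0 < ρbar)
    (hc : cbar = Real.sqrt (κ * γ * ρbar ^ (γ - 1)))
    (θ₃ : ℝ → ℝ)
    (hθ : ∀ ρ : ℝ, θ₃ ρ =
      if ρ ≤ ρbar then
        (2 * Real.sqrt (κ * γ) / (γ + 1)) * (ρ ^ ((γ + 1) / 2) - ρbar ^ ((γ + 1) / 2))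
      else Real.sqrt ((ρ - ρbar) * (κ * ρ ^ γ - κ * ρbar ^ γ))) :
    ContDiffOn ℝ 1 θ₃ (Set.Ioi (0 : ℝ)) ∧ HasDerivAt θ₃ cbar ρbar := by
  -- derivative candidate
  set D : ℝ → ℝ := fun x =>
    if x ≤ ρbar then Real.sqrt (κ * γ) * x ^ ((γ - 1) / 2)
    else ((κ * x ^ γ - κ * ρbar ^ γ) + (x - ρbar) * (κ * γ * x ^ (γ - 1))) /
      (2 * Real.sqrt ((x - ρbar) * (κ * x ^ γ - κ * ρbar ^ γ))) with hD
  have hL : (0:ℝ) < κ * γ * ρbar ^ (γ - 1) := by positivity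
  have hcpos : 0 < cbar := by rw [hc]; exact Real.sqrt_pos.2 hL
  have hDρbar : D ρbar = cbar := by
    simp only [hD, if_pos le_rfl]
    rw [hc, aux_cbar hγ hκ hρbar]
  have hθρbar : θ₃ ρbar = 0 := by
    rw [hθ, if_pos le_rfl, sub_self, mul_zero]
  -- value of θ₃ on the shock side
  have hθsh : ∀ x : ℝ, ρbar < x →
      θ₃ x = Real.sqrt ((x - ρbar) * (κ * x ^ γ - κ * ρbar ^ γ)) := fun x hx => by
    rw [hθ, if_neg (not_le.2 hx)]
  -- slope of p tends to p'(ρbar) from the right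
  have hslope : Tendsto (fun x => (κ * x ^ γ - κ * ρbar ^ γ) / (x - ρbar))
      (𝓝[>] ρbar) (𝓝 (κ * γ * ρbar ^ (γ - 1))) := by
    have h := (aux_p_deriv κ γ (ne_of_gt hρbar)).hasDerivWithinAt (s := Set.Ici ρbar)
    rw [hasDerivWithinAt_iff_tendsto_slope] at h
    rw [Set.Ici_sdiff_left] at h
    refine h.congr fun x => ?_
    rw [slope_def_field]
  -- derivative of θ₃ at ρbar
  have hderivρbar : HasDerivAt θ₃ cbar ρbar := by
    have hleft : HasDerivWithinAt θ₃ cbar (Set.Iic ρbar) ρbar := by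
      have h := ((aux_f_deriv (κ := κ) (ρbar := ρbar) hγ hρbar).hasDerivWithinAt
        (s := Set.Iic ρbar))
      rw [← aux_cbar hγ hκ hρbar, ← hc] at h
      exact h.congr (fun x hx => by rw [hθ, if_pos (Set.mem_Iic.1 hx)]) (by rw [hθ, if_pos le_rfl])
    have hright : HasDerivWithinAt θ₃ cbar (Set.Ici ρbar) ρbar := by
      rw [hasDerivWithinAt_iff_tendsto_slope, Set.Ici_sdiff_left]
      have hsq : Tendsto (fun x => Real.sqrt ((κ * x ^ γ - κ * ρbar ^ γ) / (x - ρbar)))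
          (𝓝[>] ρbar) (𝓝 cbar) := by
        rw [hc]
        exact (Real.continuous_sqrt.continuousAt).tendsto.comp hslope
      refine hsq.congr' ?_
      filter_upwards [self_mem_nhdsWithin] with x hx
      have hxgt : ρbar < x := hx
      have hd : 0 < x - ρbar := by linarith
      have harg := aux_arg_pos hγ hκ hρbar hxgt
      have hq : 0 < κ * x ^ γ - κ * ρbar ^ γ := by
        by_contra h
        push_neg at h
        nlinarith
      rw [slope_def_field, hθρbar, hθsh x hxgt, sub_zero]
      rw [show (x - ρbar) * (κ * x ^ γ - κ * ρbar ^ γ)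
          = ((κ * x ^ γ - κ * ρbar ^ γ) / (x - ρbar)) * (x - ρbar) ^ 2 by
        field_simp]
      rw [Real.sqrt_mul (by positivity) _, Real.sqrt_sq hd.le]
      rw [mul_div_assoc, div_self (ne_of_gt hd), mul_one]
    have := hleft.union hright
    rw [Set.Iic_union_Ici] at this
    exact this.hasDerivAt (by simp)
  -- derivative of θ₃ everywhere on (0, ∞)
  have key : ∀ x ∈ Set.Ioi (0:ℝ), HasDerivAt θ₃ (D x) x := by
    intro x hx
    rcases lt_trichotomy x ρbar with hlt | heq | hgt
    · have hloc : ∀ᶠ y in 𝓝 x, θ₃ y =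
          (2 * Real.sqrt (κ * γ) / (γ + 1)) * (y ^ ((γ + 1) / 2) - ρbar ^ ((γ + 1) / 2)) := by
        filter_upwards [Iio_mem_nhds hlt] with y hy
        rw [hθ, if_pos (le_of_lt hy)]
      have h := (aux_f_deriv (κ := κ) (ρbar := ρbar) hγ hx).congr_of_eventuallyEq hloc
      simpa [hD, if_pos hlt.le] using h
    · rw [heq, hDρbar]
      exact hderivρbar
    · have harg := aux_arg_pos hγ hκ hρbar hgt
      have hh : HasDerivAt (fun y : ℝ => (y - ρbar) * (κ * y ^ γ - κ * ρbar ^ γ))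
          ((κ * x ^ γ - κ * ρbar ^ γ) + (x - ρbar) * (κ * γ * x ^ (γ - 1))) x := by
        have h1 : HasDerivAt (fun y : ℝ => y - ρbar) 1 x := (hasDerivAt_id x).sub_const ρbar
        have h2 : HasDerivAt (fun y : ℝ => κ * y ^ γ - κ * ρbar ^ γ)
            (κ * γ * x ^ (γ - 1)) x := (aux_p_deriv κ γ (ne_of_gt hx)).sub_const _
        exact (h1.mul h2).congr_deriv (by ring)
      have hg := hh.sqrt (ne_of_gt harg)
      have hloc : ∀ᶠ y in 𝓝 x, θ₃ y =
          Real.sqrt ((y - ρbar) * (κ * y ^ γ - κ * ρbar ^ γ)) := by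
        filter_upwards [Ioi_mem_nhds hgt] with y hy
        exact hθsh y hy
      have h := hg.congr_of_eventuallyEq hloc
      simpa [hD, if_neg (not_le.2 hgt)] using h
  -- continuity of D on (0, ∞)
  have Dcont : ContinuousOn D (Set.Ioi (0:ℝ)) := by
    intro x hx
    rcases lt_trichotomy x ρbar with hlt | heq | hgt
    · refine ContinuousAt.continuousWithinAt ?_
      have hcont : ContinuousAt (fun y : ℝ => Real.sqrt (κ * γ) * y ^ ((γ - 1) / 2)) x :=
        continuousAt_const.mul (Real.continuousAt_rpow_const x _ (Or.inl (ne_of_gt hx)))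
      refine hcont.congr ?_
      filter_upwards [Iio_mem_nhds hlt] with y hy
      simp only [hD]
      rw [if_pos (le_of_lt (Set.mem_Iio.1 hy))]
    · rw [heq]
      have hleftc : ContinuousWithinAt D (Set.Iic ρbar) ρbar := by
        have hcont : ContinuousAt (fun y : ℝ => Real.sqrt (κ * γ) * y ^ ((γ - 1) / 2)) ρbar :=
          continuousAt_const.mul (Real.continuousAt_rpow_const ρbar _ (Or.inl (ne_of_gt hρbar)))
        refine (hcont.continuousWithinAt).congr (fun y hy => ?_) ?_
        · simp only [hD]
          rw [if_pos (Set.mem_Iic.1 hy)]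
        · simp only [hD]
          rw [if_pos le_rfl]
      have hrightc : ContinuousWithinAt D (Set.Ici ρbar) ρbar := by
        rw [← continuousWithinAt_Ioi_iff_Ici]
        unfold ContinuousWithinAt
        rw [hDρbar]
        set L := κ * γ * ρbar ^ (γ - 1) with hLdef
        have hL2 : cbar ^ 2 = L := by rw [hc]; exact Real.sq_sqrt hL.le
        have hp'cont : Tendsto (fun x => κ * γ * x ^ (γ - 1)) (𝓝[>] ρbar) (𝓝 L) := by
          have : ContinuousAt (fun x : ℝ => κ * γ * x ^ (γ - 1)) ρbar :=
            continuousAt_const.mul (Real.continuousAt_rpow_const ρbar _ (Or.inl (ne_of_gt hρbar)))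
          exact this.continuousWithinAt
        have hT : Tendsto (fun x => ((κ * x ^ γ - κ * ρbar ^ γ) / (x - ρbar)
              + κ * γ * x ^ (γ - 1)) /
              (2 * Real.sqrt ((κ * x ^ γ - κ * ρbar ^ γ) / (x - ρbar))))
            (𝓝[>] ρbar) (𝓝 cbar) := by
          have hnum := hslope.add hp'cont
          have hden := ((Real.continuous_sqrt.continuousAt).tendsto.comp hslope).const_mul 2
          have hcL : Real.sqrt L = cbar := hc.symm
          have h2c : (2 : ℝ) * Real.sqrt L ≠ 0 := by rw [hcL]; positivity
          have h := hnum.div hden h2c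
          have heq2 : (L + L) / (2 * Real.sqrt L) = cbar := by
            rw [hcL, ← hL2]; field_simp; ring
          rw [← heq2]
          exact h
        refine hT.congr' ?_
        filter_upwards [self_mem_nhdsWithin] with x hx
        have hxgt : ρbar < x := hx
        have hd : 0 < x - ρbar := by linarith
        have harg := aux_arg_pos hγ hκ hρbar hxgt
        have hq : 0 < κ * x ^ γ - κ * ρbar ^ γ := by
          by_contra h; push_neg at h; nlinarith
        set s := (κ * x ^ γ - κ * ρbar ^ γ) / (x - ρbar) with hsdef
        have hspos : 0 < s := div_pos hq hd
        have hqs : κ * x ^ γ - κ * ρbar ^ γ = (x - ρbar) * s := by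
          rw [hsdef]; field_simp
        have hsqrt : Real.sqrt ((x - ρbar) * (κ * x ^ γ - κ * ρbar ^ γ))
            = (x - ρbar) * Real.sqrt s := by
          rw [hqs, show (x - ρbar) * ((x - ρbar) * s) = (x - ρbar) ^ 2 * s by ring,
            Real.sqrt_mul (by positivity), Real.sqrt_sq hd.le]
        simp only [hD, if_neg (not_le.2 hxgt)]
        rw [hsqrt, hqs]
        rw [show (x - ρbar) * s + (x - ρbar) * (κ * γ * x ^ (γ - 1))
            = (x - ρbar) * (s + κ * γ * x ^ (γ - 1)) by ring,
          show (2 : ℝ) * ((x - ρbar) * Real.sqrt s) = (x - ρbar) * (2 * Real.sqrt s) by ring,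
          mul_div_mul_left _ _ (ne_of_gt hd)]
      have h2 := hleftc.union hrightc
      rw [Set.Iic_union_Ici, continuousWithinAt_univ] at h2
      exact h2.continuousWithinAt
    · refine ContinuousAt.continuousWithinAt ?_
      have harg := aux_arg_pos hγ hκ hρbar hgt
      have hnum : ContinuousAt (fun y : ℝ =>
          (κ * y ^ γ - κ * ρbar ^ γ) + (y - ρbar) * (κ * γ * y ^ (γ - 1))) x := by
        have h1 : ContinuousAt (fun y : ℝ => κ * y ^ γ) x :=
          continuousAt_const.mul (Real.continuousAt_rpow_const x _ (Or.inl (ne_of_gt hx)))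
        have h2 : ContinuousAt (fun y : ℝ => κ * γ * y ^ (γ - 1)) x :=
          continuousAt_const.mul (Real.continuousAt_rpow_const x _ (Or.inl (ne_of_gt hx)))
        exact (h1.sub continuousAt_const).add
          (((continuousAt_id).sub continuousAt_const).mul h2)
      have hden : ContinuousAt (fun y : ℝ =>
          2 * Real.sqrt ((y - ρbar) * (κ * y ^ γ - κ * ρbar ^ γ))) x := by
        have h1 : ContinuousAt (fun y : ℝ => κ * y ^ γ) x :=
          continuousAt_const.mul (Real.continuousAt_rpow_const x _ (Or.inl (ne_of_gt hx)))
        exact continuousAt_const.mul (Real.continuous_sqrt.continuousAt.comp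
          (((continuousAt_id).sub continuousAt_const).mul
            (h1.sub continuousAt_const)))
      have hdne : 2 * Real.sqrt ((x - ρbar) * (κ * x ^ γ - κ * ρbar ^ γ)) ≠ 0 := by
        positivity
      have hcont := hnum.div hden hdne
      refine hcont.congr ?_
      filter_upwards [Ioi_mem_nhds hgt] with y hy
      simp only [hD, Pi.div_apply]
      rw [if_neg (not_le.2 (Set.mem_Ioi.1 hy))]
  -- conclusion
  refine ⟨?_, hderivρbar⟩
  rw [show (1 : WithTop ℕ∞) = 0 + 1 by norm_num,
    contDiffOn_succ_iff_deriv_of_isOpen isOpen_Ioi]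
  refine ⟨fun x hx => (key x hx).differentiableAt.differentiableWithinAt, ?_, ?_⟩
  · simp
  · rw [contDiffOn_zero]
    exact Dcont.congr fun x hx => (key x hx).deriv
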